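/- For p ∈ (1,∞) and all real x ≠ 0 (with sin_p extended to ℝ as an odd 2π_p-periodic function), |sin_p(x)/x| ≤ 1, with strict inequality for all x ≠ 0. -/

import Mathlib

open Real

noncomputable def pi_p (p : ℝ) : ℝ := 2 * π / (p * Real.sin (π / p))

noncomputable def Fp (p y : ℝ) : ℝ := ∫ t in (0:ℝ)..y, (1 - t ^ p) ^ (-(1/p) : ℝ)

theorem abs_sincp_lt_one (p : ℝ) (hp : 1 < p) (sinp : ℝ → ℝ)
    (hbase : ∀ x ∈ Set.Icc 0 (pi_p p / 2),
      sinp x ∈ Set.Icc (0:ℝ) 1 ∧ Fp p (sinp x) = x)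
    (hodd : ∀ x, sinp (-x) = - sinp x)
    (hrefl : ∀ x, sinp (pi_p p / 2 - x) = sinp (pi_p p / 2 + x))
    (x : ℝ) (hx : x ≠ 0) :
    |sinp x / x| ≤ 1 ∧ |sinp x / x| < 1 := by
  set P : ℝ := pi_p p / 2 with hPdef
  have hp0 : (0:ℝ) < p := lt_trans one_pos hp
  -- 1 < P
  have hπp0 : 0 < π / p := div_pos Real.pi_pos hp0
  have hπpπ : π / p < π := by
    rw [div_lt_iff₀ hp0]
    nlinarith [Real.pi_pos]
  have hsinpos : 0 < Real.sin (π / p) := Real.sin_pos_of_pos_of_lt_pi hπp0 hπpπ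
  have hsinlt : Real.sin (π / p) < π / p := Real.sin_lt hπp0
  have hP1 : 1 < P := by
    have hd : 0 < p * Real.sin (π / p) := mul_pos hp0 hsinpos
    have h2 : p * Real.sin (π / p) < π := by
      have := (mul_lt_mul_iff_right₀ hp0).mpr hsinlt
      rwa [mul_div_cancel₀ π (ne_of_gt hp0)] at this
    rw [hPdef, pi_p]
    rw [div_div]
    rw [lt_div_iff₀ (by positivity)]
    nlinarith
  have hP0 : 0 < P := lt_trans one_pos hP1
  -- strict inequality on (0, P]
  have hlt : ∀ z : ℝ, 0 < z → z ≤ P → sinp z < z := by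
    intro z hz0 hzP
    obtain ⟨hy, hF⟩ := hbase z ⟨le_of_lt hz0, hzP⟩
    set y := sinp z with hydef
    rcases eq_or_lt_of_le hy.1 with h0 | h0
    · exfalso
      rw [← h0] at hF
      rw [Fp, intervalIntegral.integral_same] at hF
      exact absurd hF.symm (ne_of_gt hz0)
    · by_cases hint : IntervalIntegrable
        (fun t => (1 - t ^ p) ^ (-(1/p) : ℝ)) MeasureTheory.volume 0 y
      · have hkey : 0 < ∫ t in (0:ℝ)..y, ((1 - t ^ p) ^ (-(1/p) : ℝ) - 1) := by
          apply intervalIntegral.intervalIntegral_pos_of_pos_on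
          · exact hint.sub intervalIntegrable_const
          · intro t ht
            have ht0 : 0 < t := ht.1
            have ht1 : t < 1 := lt_of_lt_of_le ht.2 hy.2
            have htp0 : 0 < t ^ p := Real.rpow_pos_of_pos ht0 p
            have htp1 : t ^ p < 1 := Real.rpow_lt_one (le_of_lt ht0) ht1 hp0
            have hb0 : 0 < 1 - t ^ p := by linarith
            have hb1 : 1 - t ^ p < 1 := by linarith
            have : 1 < (1 - t ^ p) ^ (-(1/p) : ℝ) := by
              rw [Real.one_lt_rpow_iff_of_pos hb0]
              right
              constructor
              · exact hb1
              · have : (0:ℝ) < 1/p := by positivity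
                linarith
            linarith
          · exact h0
        have hsub : (∫ t in (0:ℝ)..y, ((1 - t ^ p) ^ (-(1/p) : ℝ) - 1))
            = Fp p y - y := by
          rw [intervalIntegral.integral_sub hint intervalIntegrable_const]
          simp [Fp]
        rw [hsub, hF] at hkey
        linarith
      · exfalso
        have : Fp p y = 0 := intervalIntegral.integral_undef hint
        rw [hF] at this
        exact absurd this (ne_of_gt hz0)
  -- antiperiodicity: sinp (x + 2P) = - sinp x
  have hper : ∀ z : ℝ, sinp (z + 2*P) = - sinp z := by
    intro z
    have h1 : sinp (P - (P + z)) = sinp (P + (P + z)) := hrefl (P + z)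
    have h2 : P - (P + z) = -z := by ring
    have h3 : P + (P + z) = z + 2*P := by ring
    rw [h2, h3] at h1
    rw [← h1, hodd]
  -- |sinp| bounded by 1 on [-P, P]
  have hboundI : ∀ z : ℝ, -P ≤ z → z ≤ P → |sinp z| ≤ 1 := by
    intro z h1 h2
    rcases le_or_gt 0 z with h | h
    · obtain ⟨hy, _⟩ := hbase z ⟨h, h2⟩
      rw [abs_of_nonneg hy.1]; exact hy.2
    · have hz' : sinp z = - sinp (-z) := by
        rw [← hodd, neg_neg]
      rw [hz', abs_neg]
      obtain ⟨hy, _⟩ := hbase (-z) ⟨by linarith, by linarith⟩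
      rw [abs_of_nonneg hy.1]; exact hy.2
  -- periodic shift
  have hshift : ∀ (n : ℤ) (z : ℝ), |sinp (z + 2*P*n)| = |sinp z| := by
    intro n
    induction n using Int.induction_on with
    | zero => intro z; simp
    | succ n ih =>
      intro z
      have : z + 2*P*((n:ℤ)+1 : ℤ) = (z + 2*P*n) + 2*P := by push_cast; ring
      rw [this, hper, abs_neg]
      exact_mod_cast ih z
    | pred n ih =>
      intro z
      have : (z + 2*P*(-(n:ℤ)-1 : ℤ)) + 2*P = z + 2*P*(-(n:ℤ) : ℤ) := by
        push_cast; ring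
      have h2 := hper (z + 2*P*(-(n:ℤ)-1 : ℤ))
      rw [this] at h2
      have := congrArg abs h2
      rw [abs_neg] at this
      rw [← this, ih]
  -- global bound
  have hbound : ∀ z : ℝ, |sinp z| ≤ 1 := by
    intro z
    set n : ℤ := ⌊(z + P) / (2*P)⌋ with hn
    set y := z - 2*P*n with hy
    have h2P : (0:ℝ) < 2*P := by linarith
    have hfl := Int.floor_le ((z + P) / (2*P))
    have hfl2 := Int.lt_floor_add_one ((z + P) / (2*P))
    have hle : 2*P*n ≤ z + P := by
      rw [← le_div_iff₀' h2P]; exact_mod_cast hfl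
    have hlt2 : z + P < 2*P*(n+1) := by
      rw [← div_lt_iff₀' h2P]; exact_mod_cast hfl2
    have hy1 : -P ≤ y := by rw [hy]; linarith
    have hy2 : y ≤ P := by rw [hy]; nlinarith
    have : z = y + 2*P*n := by rw [hy]; ring
    rw [this, hshift n y]
    exact hboundI y hy1 hy2
  -- main strict bound: |sinp z| < z for z > 0
  have hmain : ∀ z : ℝ, 0 < z → |sinp z| < z := by
    intro z hz
    rcases le_or_gt z P with h | h
    · have := hlt z hz h
      obtain ⟨hy, _⟩ := hbase z ⟨le_of_lt hz, h⟩
      rw [abs_of_nonneg hy.1]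
      exact this
    · exact lt_of_le_of_lt (hbound z) (lt_trans hP1 h)
  -- conclude
  have hfinal : |sinp x / x| < 1 := by
    rw [abs_div]
    rw [div_lt_one (abs_pos.mpr hx)]
    rcases lt_or_gt_of_ne hx with h | h
    · have hx' : 0 < -x := by linarith
      have := hmain (-x) hx'
      rw [hodd, abs_neg] at this
      rwa [abs_of_neg h]
    · have := hmain x h
      rwa [abs_of_pos h]
  exact ⟨le_of_lt hfinal, hfinal⟩
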